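/- Let B be a left exact comonad on a complete category C (B commutes with all small limits). If X_• is a para-cyclic object in C such that each X_n carries a B-comodule structure ρ_n : X_n → B(X_n) compatible with faces and degeneracies (but not necessarily with the cyclic operators), then defining X_n^B as the limit over m ∈ ℕ of the equalizers of the pairs (ρ_n ∘ τ_n^m, B(τ_n^m) ∘ ρ_n), the cyclic operators τ_n restrict to X_n^B, i.e. there exist unique morphisms τ_n^B : X_n^B → X_n^B with η_n ∘ τ_n^B = τ_n ∘ η_n, where η_n : X_n^B → X_n is the canonical morphism. -/

import Mathlib

open CategoryTheory Simplicial

/-- A para-cyclic object in a category `C`. -/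
structure Paracyclic (C : Type*) [Category C] where
  X : SimplicialObject C
  τ : ∀ n : ℕ, X _⦋n⦌ ⟶ X _⦋n⦌
  δτ_succ : ∀ (n : ℕ) (i : Fin (n + 1)),
    τ (n + 1) ≫ X.δ i.succ = X.δ i.castSucc ≫ τ n
  δτ_zero : ∀ n : ℕ, τ (n + 1) ≫ X.δ 0 = X.δ (Fin.last (n + 1))
  στ_succ : ∀ (n : ℕ) (i : Fin n),
    τ n ≫ X.σ i.succ = X.σ i.castSucc ≫ τ (n + 1)
  στ_zero : ∀ n : ℕ, τ n ≫ X.σ 0 = X.σ (Fin.last n) ≫ τ (n + 1) ≫ τ (n + 1)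

/-- `τ_n^k`. -/
def Paracyclic.τpow {C : Type*} [Category C] (P : Paracyclic C) (n : ℕ) :
    ℕ → (P.X _⦋n⦌ ⟶ P.X _⦋n⦌) := fun m => match m with
  | 0 => 𝟙 _
  | k + 1 => P.τ n ≫ P.τpow n k

/-- let `B` be a left exact comonad on a complete category `C`
and `X_•` a para-cyclic object whose levels carry `B`-comodule structures
`ρ_n` compatible with faces and degeneracies (a pseudo-para-cyclic
`B`-comodule).  If `η_n : X_n^B ⟶ X_n` is the limit over `m ∈ ℕ` of the
equalizers of the pairs `(ρ_n ∘ τ_n^m, B(τ_n^m) ∘ ρ_n)` (characterized here by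
its universal property), then the cyclic operators restrict: there is a unique
`τ_n^B : X_n^B ⟶ X_n^B` with `η_n ∘ τ_n^B = τ_n ∘ η_n`. -/
theorem cyclic_operator_restricts {C : Type*} [Category C]
    [Limits.HasLimits C] (B : Comonad C)
    [Limits.PreservesLimits B.toFunctor]
    (P : Paracyclic C)
    (ρ : ∀ n : ℕ, P.X _⦋n⦌ ⟶ B.obj (P.X _⦋n⦌))
    (hcounit : ∀ n, ρ n ≫ B.ε.app _ = 𝟙 _)
    (hcoassoc : ∀ n, ρ n ≫ B.δ.app _ = ρ n ≫ B.map (ρ n))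
    (hδ : ∀ (n : ℕ) (i : Fin (n + 2)),
      P.X.δ i ≫ ρ n = ρ (n + 1) ≫ B.map (P.X.δ i))
    (hσ : ∀ (n : ℕ) (i : Fin (n + 1)),
      P.X.σ i ≫ ρ (n + 1) = ρ n ≫ B.map (P.X.σ i))
    (L : ℕ → C) (η : ∀ n : ℕ, L n ⟶ P.X _⦋n⦌)
    (hLeq : ∀ n m : ℕ,
      η n ≫ P.τpow n m ≫ ρ n = η n ≫ ρ n ≫ B.map (P.τpow n m))
    (hLuniv : ∀ (n : ℕ) (Z : C) (f : Z ⟶ P.X _⦋n⦌),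
      (∀ m : ℕ, f ≫ P.τpow n m ≫ ρ n = f ≫ ρ n ≫ B.map (P.τpow n m)) →
      ∃! g : Z ⟶ L n, g ≫ η n = f) :
    ∀ n : ℕ, ∃! tB : L n ⟶ L n, tB ≫ η n = η n ≫ P.τ n := by
  intro n
  have key : ∀ m : ℕ, (η n ≫ P.τ n) ≫ P.τpow n m ≫ ρ n
      = (η n ≫ P.τ n) ≫ ρ n ≫ B.map (P.τpow n m) := by
    intro m
    have h1 : η n ≫ P.τ n ≫ ρ n = η n ≫ ρ n ≫ B.map (P.τ n) := by
      have := hLeq n 1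
      simpa [Paracyclic.τpow] using this
    calc (η n ≫ P.τ n) ≫ P.τpow n m ≫ ρ n
        = η n ≫ P.τpow n (m + 1) ≫ ρ n := by
          simp [Paracyclic.τpow]
      _ = η n ≫ ρ n ≫ B.map (P.τpow n (m + 1)) := hLeq n (m + 1)
      _ = η n ≫ ρ n ≫ B.map (P.τ n) ≫ B.map (P.τpow n m) := by
          simp [Paracyclic.τpow, B.map_comp]
      _ = (η n ≫ P.τ n ≫ ρ n) ≫ B.map (P.τpow n m) := by
          rw [h1]; simp
      _ = (η n ≫ P.τ n) ≫ ρ n ≫ B.map (P.τpow n m) := by simp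
  exact hLuniv n (L n) (η n ≫ P.τ n) key
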